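/- Let S be a (discrete) semigroup and s₀ ∈ S. The subset S·s₀ = {s s₀ : s ∈ S} is a subsemigroup of S. Then S is left amenable if and only if S·s₀ is left amenable (with respect to means on ℓ∞(S·s₀) and left translations by elements of S·s₀). -/

import Mathlib

open scoped BoundedContinuousFunction

/-- A (discrete) semigroup `S` is left amenable if there is a left invariant mean on
`ℓ∞(S)`: a continuous linear functional `m` with `m(1) = 1`, `m(f) ≥ 0` for `f ≥ 0`, and
`m(ℓ_s f) = m(f)` for all `s ∈ S`, where `(ℓ_s f)(t) = f(st)`. -/
def LeftAmenableSemigroup (S : Type*) [Semigroup S] [TopologicalSpace S]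
    [DiscreteTopology S] : Prop :=
  ∃ m : (S →ᵇ ℝ) →L[ℝ] ℝ, m 1 = 1 ∧ (∀ f : S →ᵇ ℝ, 0 ≤ f → 0 ≤ m f) ∧
    ∀ (s : S) (f : S →ᵇ ℝ),
      m (f.compContinuous ⟨fun t => s * t, continuous_of_discreteTopology⟩) = m f

/-- Precomposition with a continuous map, as a continuous linear map on bounded
continuous real-valued functions. -/
noncomputable def precompCLM {A B : Type*} [TopologicalSpace A] [TopologicalSpace B]
    (φ : C(B, A)) : (A →ᵇ ℝ) →L[ℝ] (B →ᵇ ℝ) :=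
  LinearMap.mkContinuous
    { toFun := fun f => f.compContinuous φ
      map_add' := fun f g => by ext b; simp
      map_smul' := fun c f => by ext b; simp }
    1 (fun f => by simpa using f.norm_compContinuous_le φ)

@[simp] lemma precompCLM_apply {A B : Type*} [TopologicalSpace A] [TopologicalSpace B]
    (φ : C(B, A)) (f : A →ᵇ ℝ) (b : B) : precompCLM φ f b = f (φ b) := rfl

/-- Let `S` be a semigroup, `s₀ ∈ S`, and let `T` be the subsemigroup `S·s₀`.
Then `S` is left amenable if and only if `S·s₀` is left amenable. -/
theorem leftAmenable_iff_leftAmenable_mul_right (S : Type*) [Semigroup S]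
    [TopologicalSpace S] [DiscreteTopology S] (s₀ : S)
    (T : Subsemigroup S) (hT : (T : Set S) = Set.range (fun s => s * s₀)) :
    LeftAmenableSemigroup S ↔ LeftAmenableSemigroup ↥T := by
  have hmem : ∀ s : S, s * s₀ ∈ T := fun s => by
    rw [← Subsemigroup.mem_carrier, show (T.carrier : Set S) = (T : Set S) from rfl, hT]
    exact ⟨s, rfl⟩
  constructor
  · rintro ⟨m, hm1, hmpos, hminv⟩
    -- φ : S → T, s ↦ s * s₀
    set φ : C(S, ↥T) := ⟨fun s => ⟨s * s₀, hmem s⟩, continuous_of_discreteTopology⟩ with hφ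
    refine ⟨m.comp (precompCLM φ), ?_, ?_, ?_⟩
    · have : precompCLM φ (1 : ↥T →ᵇ ℝ) = 1 := by ext s; simp
      simpa [this] using hm1
    · intro g hg
      exact hmpos _ (fun s => hg (φ s))
    · intro t g
      have key : precompCLM φ (g.compContinuous ⟨fun u => t * u, continuous_of_discreteTopology⟩)
          = (precompCLM φ g).compContinuous
              ⟨fun s => (t : S) * s, continuous_of_discreteTopology⟩ := by
        ext s
        simp only [precompCLM_apply, BoundedContinuousFunction.compContinuous_apply,
          ContinuousMap.coe_mk]
        congr 1
        exact Subtype.ext (mul_assoc (t : S) s s₀).symm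
      simp only [ContinuousLinearMap.comp_apply, key]
      exact hminv (t : S) (precompCLM φ g)
  · rintro ⟨m, hm1, hmpos, hminv⟩
    -- ι : T → S
    set ι : C(↥T, S) := ⟨fun t => (t : S), continuous_of_discreteTopology⟩ with hι
    refine ⟨m.comp (precompCLM ι), ?_, ?_, ?_⟩
    · have : precompCLM ι (1 : S →ᵇ ℝ) = 1 := by ext t; simp
      simpa [this] using hm1
    · intro f hf
      exact hmpos _ (fun t => hf (ι t))
    · intro s f
      set t₁ : ↥T := ⟨s₀ * s₀, hmem s₀⟩ with ht₁
      set t₂ : ↥T := ⟨s * (s₀ * s₀), by rw [← mul_assoc]; exact hmem (s * s₀)⟩ with ht₂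
      simp only [ContinuousLinearMap.comp_apply]
      have h1 := hminv t₁ (precompCLM ι
        (f.compContinuous ⟨fun u => s * u, continuous_of_discreteTopology⟩))
      have h2 := hminv t₂ (precompCLM ι f)
      have key : (precompCLM ι
            (f.compContinuous ⟨fun u => s * u, continuous_of_discreteTopology⟩)).compContinuous
            ⟨fun u => t₁ * u, continuous_of_discreteTopology⟩
          = (precompCLM ι f).compContinuous
            ⟨fun u => t₂ * u, continuous_of_discreteTopology⟩ := by
        ext u
        simp only [BoundedContinuousFunction.compContinuous_apply, ContinuousMap.coe_mk,
          precompCLM_apply]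
        show f (s * ((t₁ * u : ↥T) : S)) = f ((t₂ * u : ↥T) : S)
        push_cast
        simp [ht₁, ht₂, mul_assoc]
      rw [key, h2] at h1
      exact h1.symm
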